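/- arXiv:2303.16426 — 2 statements merged into one kernel-verified Lean document; each statement's English description precedes it below -/
import Mathlib

section
/- Let X be a complex n-Banach algebra with unit e. Then every topological divisor of zero in X is non-invertible; that is, the set Z of topological divisors of zero is a subset of the set S of non-invertible elements of X. -/
open Filter

/-- The value `‖x, a₂, …, aₙ‖` of an `n`-norm (with `n = m + 1`), where `N` is the
`n`-norm as a function of all `n` arguments, `x` is the first argument and `a` lists
the remaining `m` arguments. -/
def nrm {X : Type*} {m : ℕ} (N : (Fin (m + 1) → X) → ℝ) (x : X) (a : Fin m → X) : ℝ :=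
  N (Fin.cons x a)

/-- Convergence of a sequence in the `n`-norm sense: `‖s k − x, a₂,…,aₙ‖ → 0`
for every choice of `a₂, …, aₙ`. -/
def NConv {X : Type*} [AddCommGroup X] {m : ℕ} (N : (Fin (m + 1) → X) → ℝ)
    (s : ℕ → X) (x : X) : Prop :=
  ∀ a : Fin m → X, Tendsto (fun k => nrm N (s k - x) a) atTop (nhds 0)

/-- Cauchy property of a sequence in the `n`-norm sense:
`‖s l − s k, a₂,…,aₙ‖ → 0` as `l, k → ∞`, for every choice of `a₂, …, aₙ`. -/
def NCauchy {X : Type*} [AddCommGroup X] {m : ℕ} (N : (Fin (m + 1) → X) → ℝ)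
    (s : ℕ → X) : Prop :=
  ∀ a : Fin m → X, Tendsto (fun p : ℕ × ℕ => nrm N (s p.1 - s p.2) a) atTop (nhds 0)

/-- `X`, a complex algebra, together with the `n`-norm `N` (where `n = m + 1`), is an
`n`-normed algebra. -/
structure IsNNormAlg (X : Type*) [Ring X] [Algebra ℂ X] {m : ℕ}
    (N : (Fin (m + 1) → X) → ℝ) : Prop where
  nonneg : ∀ v : Fin (m + 1) → X, 0 ≤ N v
  perm_invariant : ∀ (v : Fin (m + 1) → X) (σ : Equiv.Perm (Fin (m + 1))), N (v ∘ σ) = N v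
  norm_smul : ∀ (α : ℂ) (x : X) (a : Fin m → X),
    nrm N (α • x) a = ‖α‖ * nrm N x a
  norm_add_le : ∀ (x y : X) (a : Fin m → X),
    nrm N (x + y) a ≤ nrm N x a + nrm N y a
  norm_mul_le : ∀ (x y : X) (a : Fin m → X),
    nrm N (x * y) a ≤ nrm N x a * nrm N y a

/-- An `n`-Banach algebra: an `n`-normed algebra (with identity, provided by `Ring`)
in which every Cauchy sequence converges. -/
structure IsNBanachAlg (X : Type*) [Ring X] [Algebra ℂ X] {m : ℕ}
    (N : (Fin (m + 1) → X) → ℝ) extends IsNNormAlg X N : Prop where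
  complete : ∀ s : ℕ → X, NCauchy N s → ∃ x : X, NConv N s x

/-- An element is invertible if it has a two-sided inverse. -/
def Inv' {X : Type*} [Ring X] (x : X) : Prop := ∃ y : X, x * y = 1 ∧ y * x = 1

/-- `z` is a topological divisor of zero: there is a sequence `(z_k)` with
`‖z_k, a₂,…,aₙ‖ = 1` for every `a₂,…,aₙ` and every `k`, such that `z·z_k → θ` or
`z_k·z → θ` in the `n`-norm sense. -/
def TopDivZero {X : Type*} [Ring X] [Algebra ℂ X] {m : ℕ}
    (N : (Fin (m + 1) → X) → ℝ) (z : X) : Prop :=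
  ∃ s : ℕ → X, (∀ (k : ℕ) (a : Fin m → X), nrm N (s k) a = 1) ∧
    (NConv N (fun k => z * s k) 0 ∨ NConv N (fun k => s k * z) 0)

/-- In a complex `n`-Banach algebra, every topological divisor of zero is
non-invertible: `Z ⊆ S`. -/
theorem topDivZero_not_invertible {X : Type*} [Ring X] [Algebra ℂ X] {m : ℕ}
    (N : (Fin (m + 1) → X) → ℝ) (hN : IsNBanachAlg X N)
    (z : X) (hz : TopDivZero N z) :
    ¬ Inv' z := by
  rintro ⟨y, hzy, hyz⟩
  obtain ⟨s, hs1, hconv | hconv⟩ := hz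
  · have h := (hconv (fun _ => 0)).const_mul (nrm N y (fun _ => 0))
    rw [mul_zero] at h
    have hge : ∀ k : ℕ, (1 : ℝ) ≤ nrm N y (fun _ => 0) * nrm N (z * s k - 0) (fun _ => 0) := by
      intro k
      have : s k = y * (z * s k) := by rw [← mul_assoc, hyz, one_mul]
      calc (1 : ℝ) = nrm N (s k) (fun _ => 0) := (hs1 k _).symm
        _ = nrm N (y * (z * s k)) (fun _ => 0) := by rw [← this]
        _ ≤ nrm N y (fun _ => 0) * nrm N (z * s k) (fun _ => 0) :=
            hN.norm_mul_le _ _ _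
        _ = nrm N y (fun _ => 0) * nrm N (z * s k - 0) (fun _ => 0) := by rw [sub_zero]
    have := ge_of_tendsto h (Filter.Eventually.of_forall hge)
    linarith
  · have h := (hconv (fun _ => 0)).const_mul (nrm N y (fun _ => 0))
    rw [mul_zero] at h
    have hge : ∀ k : ℕ, (1 : ℝ) ≤ nrm N y (fun _ => 0) * nrm N (s k * z - 0) (fun _ => 0) := by
      intro k
      have : s k = (s k * z) * y := by rw [mul_assoc, hzy, mul_one]
      calc (1 : ℝ) = nrm N (s k) (fun _ => 0) := (hs1 k _).symm
        _ = nrm N ((s k * z) * y) (fun _ => 0) := by rw [← this]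
        _ ≤ nrm N (s k * z) (fun _ => 0) * nrm N y (fun _ => 0) :=
            hN.norm_mul_le _ _ _
        _ = nrm N y (fun _ => 0) * nrm N (s k * z - 0) (fun _ => 0) := by
            rw [sub_zero, mul_comm]
    have := ge_of_tendsto h (Filter.Eventually.of_forall hge)
    linarith
end

section
/- Let X be a complex n-Banach algebra with unit e, let b₂,…,bₙ ∈ X be fixed, and let T be a complex b-homomorphism on X × ⟨b₂⟩ × ⋯ × ⟨bₙ⟩, i.e. a nonzero map x ↦ T(x, b₂,…,bₙ) from X to ℂ that is ℂ-linear in x, bounded in the sense that there is M > 0 with |T(x, b₂,…,bₙ)| ≤ M·‖x, b₂,…,bₙ‖ for all x ∈ X, and multiplicative: T(x·y, b₂,…,bₙ) = T(x, b₂,…,bₙ)·T(y, b₂,…,bₙ) for all x, y ∈ X. If x ∈ X satisfies ‖x, a₂,…,aₙ‖ < 1 for every a₂,…,aₙ ∈ X, then |T(x, b₂,…,bₙ)| < 1. -/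
open Filter

/-- If `T` is a complex `b`-homomorphism on a complex `n`-Banach algebra (a nonzero,
bounded, multiplicative `ℂ`-linear functional in the direction `b₂,…,bₙ`) and
`‖x, a₂,…,aₙ‖ < 1` for every `a₂,…,aₙ`, then `|T(x, b₂,…,bₙ)| < 1`. -/
theorem abs_lt_one_of_complex_homomorphism {X : Type*} [Ring X] [Algebra ℂ X] {m : ℕ}
    (N : (Fin (m + 1) → X) → ℝ) (hN : IsNBanachAlg X N)
    (b : Fin m → X) (T : X →ₗ[ℂ] ℂ) (hT : T ≠ 0)
    (hbd : ∃ M : ℝ, 0 < M ∧ ∀ x : X, ‖T x‖ ≤ M * nrm N x b)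
    (hmul : ∀ x y : X, T (x * y) = T x * T y)
    (x : X) (hx : ∀ a : Fin m → X, nrm N x a < 1) :
    ‖T x‖ < 1 := by
  obtain ⟨M, hM0, hMb⟩ := hbd
  set r : ℝ := nrm N x b with hr
  have hr1 : r < 1 := hx b
  have hr0 : 0 ≤ r := hN.nonneg _
  -- norm of powers
  have hpow : ∀ k : ℕ, nrm N (x ^ (k + 1)) b ≤ r ^ (k + 1) := by
    intro k
    induction k with
    | zero => simp [hr]
    | succ k ih =>
        calc nrm N (x ^ (k + 2)) b = nrm N (x ^ (k + 1) * x) b := by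
              rw [pow_succ]
          _ ≤ nrm N (x ^ (k + 1)) b * r := hN.norm_mul_le _ _ _
          _ ≤ r ^ (k + 1) * r := by
              apply mul_le_mul_of_nonneg_right ih hr0
          _ = r ^ (k + 2) := by ring
  -- T of powers
  have hTpow : ∀ k : ℕ, T (x ^ (k + 1)) = (T x) ^ (k + 1) := by
    intro k
    induction k with
    | zero => simp
    | succ k ih => rw [pow_succ, hmul, ih]; ring
  by_contra h
  push_neg at h
  have hkey : ∀ k : ℕ, (1 : ℝ) ≤ M * r ^ (k + 1) := by
    intro k
    have h1 : (1 : ℝ) ≤ ‖T x‖ ^ (k + 1) := one_le_pow₀ h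
    have h2 : ‖T x‖ ^ (k + 1) ≤ M * r ^ (k + 1) := by
      calc ‖T x‖ ^ (k + 1) = ‖T (x ^ (k + 1))‖ := by
            rw [hTpow, norm_pow]
        _ ≤ M * nrm N (x ^ (k + 1)) b := hMb _
        _ ≤ M * r ^ (k + 1) := by
            apply mul_le_mul_of_nonneg_left (hpow k) hM0.le
    linarith
  have htend : Tendsto (fun k : ℕ => M * r ^ (k + 1)) atTop (nhds 0) := by
    have := tendsto_pow_atTop_nhds_zero_of_lt_one hr0 hr1
    have h2 : Tendsto (fun k : ℕ => M * r ^ k) atTop (nhds (M * 0)) :=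
      this.const_mul M
    rw [mul_zero] at h2
    exact h2.comp (tendsto_add_atTop_nat 1)
  have := htend.eventually (eventually_lt_nhds (by norm_num : (0:ℝ) < 1))
  obtain ⟨k, hk⟩ := this.exists
  exact absurd (hkey k) (not_le.mpr hk)
end
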